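/- For p = n+2, the function ψ = log(c²(y1-a)^(2n+2)+(n+1)²(y2-b)²) satisfies Δ_(n+2) ψ = Y1(‖∇₀ψ‖^n Y1ψ) + Y2(‖∇₀ψ‖^n Y2ψ) = 0 on ℝ² \ {(a,b)}. -/

import Mathlib

noncomputable section

abbrev P2 : Type := ℝ × ℝ

/-- Grushin vector field Y1 = ∂/∂y1 (real-valued functions). -/
def Y1r (u : P2 → ℝ) (q : P2) : ℝ := fderiv ℝ u q (1, 0)

/-- Grushin vector field Y2 = c (y1-a)^n ∂/∂y2 (real-valued functions). -/
def Y2r (a c : ℝ) (n : ℕ) (u : P2 → ℝ) (q : P2) : ℝ :=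
  c * (q.1 - a) ^ n * fderiv ℝ u q (0, 1)

def psiLog (a b c : ℝ) (n : ℕ) (q : P2) : ℝ :=
  Real.log (c ^ 2 * (q.1 - a) ^ (2 * n + 2) + ((n : ℝ) + 1) ^ 2 * (q.2 - b) ^ 2)

namespace GrushinAux

def Dfun (a b c : ℝ) (n : ℕ) (q : P2) : ℝ :=
  c ^ 2 * (q.1 - a) ^ (2 * n + 2) + ((n : ℝ) + 1) ^ 2 * (q.2 - b) ^ 2

lemma Dfun_pos (a b c : ℝ) (hc : c ≠ 0) (n : ℕ) (q : P2) (hq : q ≠ (a, b)) :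
    0 < Dfun a b c n q := by
  have e1 : (q.1 - a) ^ (2 * n + 2) = ((q.1 - a) ^ (n + 1)) ^ 2 := by
    rw [← pow_mul]; ring_nf
  have h1 : 0 ≤ c ^ 2 * (q.1 - a) ^ (2 * n + 2) := by rw [e1]; positivity
  have h2 : 0 ≤ ((n : ℝ) + 1) ^ 2 * (q.2 - b) ^ 2 := by positivity
  rcases eq_or_ne q.1 a with h | h
  · have hv : q.2 ≠ b := fun hv => hq (Prod.ext h hv)
    have : 0 < ((n : ℝ) + 1) ^ 2 * (q.2 - b) ^ 2 := by
      have : q.2 - b ≠ 0 := sub_ne_zero.mpr hv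
      positivity
    unfold Dfun; linarith
  · have : 0 < c ^ 2 * (q.1 - a) ^ (2 * n + 2) := by
      rw [e1]
      have : q.1 - a ≠ 0 := sub_ne_zero.mpr h
      positivity
    unfold Dfun; linarith

lemma hasFDerivAt_Dfun (a b c : ℝ) (n : ℕ) (r : P2) :
    HasFDerivAt (Dfun a b c n)
      ((2 * ((n:ℝ) + 1) * c ^ 2 * (r.1 - a) ^ (2 * n + 1)) • ContinuousLinearMap.fst ℝ ℝ ℝ +
       (2 * ((n:ℝ) + 1) ^ 2 * (r.2 - b)) • ContinuousLinearMap.snd ℝ ℝ ℝ) r := by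
  have hx : HasFDerivAt (fun y : P2 => y.1 - a) (ContinuousLinearMap.fst ℝ ℝ ℝ) r :=
    hasFDerivAt_fst.sub_const a
  have hy : HasFDerivAt (fun y : P2 => y.2 - b) (ContinuousLinearMap.snd ℝ ℝ ℝ) r :=
    hasFDerivAt_snd.sub_const b
  have h1 := ((hasDerivAt_pow (2 * n + 2) (r.1 - a)).comp_hasFDerivAt r hx).const_mul (c ^ 2)
  have h2 := ((hasDerivAt_pow 2 (r.2 - b)).comp_hasFDerivAt r hy).const_mul (((n : ℝ) + 1) ^ 2)
  have := h1.add h2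
  refine this.congr_fderiv ?_
  congr 1
  · rw [smul_smul]
    congr 1
    push_cast [Nat.add_sub_cancel]
    ring
  · rw [smul_smul]
    congr 1
    norm_num
    ring

lemma psiLog_eq (a b c : ℝ) (n : ℕ) :
    psiLog a b c n = fun q => Real.log (Dfun a b c n q) := rfl

lemma hasFDerivAt_psiLog (a b c : ℝ) (hc : c ≠ 0) (n : ℕ) (r : P2) (hr : r ≠ (a, b)) :
    HasFDerivAt (psiLog a b c n)
      ((Dfun a b c n r)⁻¹ •
        ((2 * ((n:ℝ) + 1) * c ^ 2 * (r.1 - a) ^ (2 * n + 1)) • ContinuousLinearMap.fst ℝ ℝ ℝ +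
         (2 * ((n:ℝ) + 1) ^ 2 * (r.2 - b)) • ContinuousLinearMap.snd ℝ ℝ ℝ)) r := by
  rw [psiLog_eq]
  exact (hasFDerivAt_Dfun a b c n r).log (Dfun_pos a b c hc n r hr).ne'

lemma fderiv_psiLog_apply (a b c : ℝ) (hc : c ≠ 0) (n : ℕ) (r : P2) (hr : r ≠ (a, b)) (w : P2) :
    fderiv ℝ (psiLog a b c n) r w =
      (Dfun a b c n r)⁻¹ * (2 * ((n:ℝ) + 1) * c ^ 2 * (r.1 - a) ^ (2 * n + 1) * w.1 +
        2 * ((n:ℝ) + 1) ^ 2 * (r.2 - b) * w.2) := by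
  rw [(hasFDerivAt_psiLog a b c hc n r hr).fderiv]
  simp [ContinuousLinearMap.smul_apply, ContinuousLinearMap.add_apply, smul_eq_mul]
  ring

def SF (a b c : ℝ) (n : ℕ) (r : P2) : ℝ := Real.sqrt (Dfun a b c n r)

def G1 (a b c : ℝ) (n : ℕ) (r : P2) : ℝ :=
  2 ^ (n+1) * ((n:ℝ)+1) ^ (n+1) * |c| ^ n * c ^ 2 *
    ((r.1 - a) ^ (2*n+1) * |r.1 - a| ^ (n*n)) / (SF a b c n r) ^ (n+2)

def G2 (a b c : ℝ) (n : ℕ) (r : P2) : ℝ :=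
  2 ^ (n+1) * ((n:ℝ)+1) ^ (n+2) * |c| ^ n * c *
    ((r.1 - a) ^ n * |r.1 - a| ^ (n*n) * (r.2 - b)) / (SF a b c n r) ^ (n+2)

lemma SF_pos (a b c : ℝ) (hc : c ≠ 0) (n : ℕ) (r : P2) (hr : r ≠ (a, b)) :
    0 < SF a b c n r := Real.sqrt_pos.mpr (Dfun_pos a b c hc n r hr)

lemma SF_sq (a b c : ℝ) (hc : c ≠ 0) (n : ℕ) (r : P2) (hr : r ≠ (a, b)) :
    (SF a b c n r) ^ 2 = Dfun a b c n r :=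
  Real.sq_sqrt (Dfun_pos a b c hc n r hr).le

lemma key_alg (n : ℕ) (m c u v D S : ℝ) (hD : 0 < D) (hS2 : S ^ 2 = D)
    (hDdef : D = c ^ 2 * u ^ (2*n+2) + m ^ 2 * v ^ 2) :
    (D⁻¹ * (2 * m * c ^ 2 * u ^ (2*n+1))) ^ 2 + (c * u ^ n * (D⁻¹ * (2 * m ^ 2 * v))) ^ 2 =
      (2 * m * |c| * |u| ^ n / S) ^ 2 := by
  have h2 : (|u| ^ n) ^ 2 = (u ^ n) ^ 2 := by rw [← abs_pow, sq_abs]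
  have h3 : |c| ^ 2 = c ^ 2 := sq_abs c
  have key : (2 * m * |c| * |u| ^ n / S) ^ 2 = 4 * m ^ 2 * (c ^ 2 * (u ^ n) ^ 2) / D := by
    rw [div_pow, hS2, mul_pow, mul_pow, mul_pow, h2, h3]; ring
  rw [key]
  field_simp [hD.ne']
  rw [hDdef]; ring

lemma Y1psi (a b c : ℝ) (hc : c ≠ 0) (n : ℕ) (r : P2) (hr : r ≠ (a, b)) :
    Y1r (psiLog a b c n) r =
      (Dfun a b c n r)⁻¹ * (2 * ((n:ℝ) + 1) * c ^ 2 * (r.1 - a) ^ (2 * n + 1)) := by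
  have := fderiv_psiLog_apply a b c hc n r hr (1, 0)
  simpa [Y1r] using this

lemma Y2psi (a b c : ℝ) (hc : c ≠ 0) (n : ℕ) (r : P2) (hr : r ≠ (a, b)) :
    Y2r a c n (psiLog a b c n) r =
      c * (r.1 - a) ^ n * ((Dfun a b c n r)⁻¹ * (2 * ((n:ℝ) + 1) ^ 2 * (r.2 - b))) := by
  have := fderiv_psiLog_apply a b c hc n r hr (0, 1)
  simp only [Y2r, this]
  ring_nf

lemma norm_closed (a b c : ℝ) (hc : c ≠ 0) (n : ℕ) (r : P2) (hr : r ≠ (a, b)) :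
    Real.sqrt ((Y1r (psiLog a b c n) r) ^ 2 + (Y2r a c n (psiLog a b c n) r) ^ 2) =
      2 * ((n:ℝ)+1) * |c| * |r.1 - a| ^ n / SF a b c n r := by
  rw [Y1psi a b c hc n r hr, Y2psi a b c hc n r hr,
    key_alg n ((n:ℝ)+1) c (r.1 - a) (r.2 - b) _ _ (Dfun_pos a b c hc n r hr)
      (SF_sq a b c hc n r hr) rfl]
  exact Real.sqrt_sq (div_nonneg (by positivity) (SF_pos a b c hc n r hr).le)

lemma F1_eq (a b c : ℝ) (hc : c ≠ 0) (n : ℕ) (r : P2) (hr : r ≠ (a, b)) :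
    Real.sqrt ((Y1r (psiLog a b c n) r) ^ 2 + (Y2r a c n (psiLog a b c n) r) ^ 2) ^ n *
      Y1r (psiLog a b c n) r = G1 a b c n r := by
  rw [norm_closed a b c hc n r hr, Y1psi a b c hc n r hr]
  have hS := SF_pos a b c hc n r hr
  have hS2 := SF_sq a b c hc n r hr
  rw [← hS2]
  unfold G1
  rw [div_pow, mul_pow, mul_pow, mul_pow, ← pow_mul]
  field_simp [hS.ne']
  ring

lemma F2_eq (a b c : ℝ) (hc : c ≠ 0) (n : ℕ) (r : P2) (hr : r ≠ (a, b)) :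
    Real.sqrt ((Y1r (psiLog a b c n) r) ^ 2 + (Y2r a c n (psiLog a b c n) r) ^ 2) ^ n *
      Y2r a c n (psiLog a b c n) r = G2 a b c n r := by
  rw [norm_closed a b c hc n r hr, Y2psi a b c hc n r hr]
  have hS := SF_pos a b c hc n r hr
  have hS2 := SF_sq a b c hc n r hr
  rw [← hS2]
  unfold G2
  rw [div_pow, mul_pow, mul_pow, mul_pow, ← pow_mul]
  field_simp [hS.ne']
  ring

lemma final_alg (n : ℕ) (c u v S CA1 CB1 : ℝ) (hS : 0 < S)
    (hS2 : S ^ 2 = c ^ 2 * u ^ (2*n+2) + ((n:ℝ)+1) ^ 2 * v ^ 2)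
    (hCB : c * CB1 = ((n:ℝ)+1) * CA1) :
    CA1 * (u ^ (n*n+2*n+1) * (-((S^(n+2))^2)⁻¹ * (↑(n+2) * S^(n+1) *
        (1/(2*S) * (2*((n:ℝ)+1)*c^2*u^(2*n+1))))) +
      (S^(n+2))⁻¹ * (↑(n*n+2*n+1) * u^(n*n+2*n))) +
    c * u^n * (CB1 * (u^(n*n+n) * v * (-((S^(n+2))^2)⁻¹ * (↑(n+2) * S^(n+1) *
        (1/(2*S) * (2*((n:ℝ)+1)^2*v)))) +
      (S^(n+2))⁻¹ * u^(n*n+n))) = 0 := by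
  have hSn : S ≠ 0 := hS.ne'
  push_cast
  field_simp
  linear_combination (CA1*((n:ℝ)+1)*((n:ℝ)+2)*u^(n*n+2*n)*S^(n+1)) * hS2 +
    (u^(n*n+2*n)*S^(n+1)*(S^2 - ((n:ℝ)+2)*((n:ℝ)+1)^2*v^2)) * hCB

end GrushinAux

open GrushinAux in
theorem grushin_np2_harmonic (a b c : ℝ) (hc : c ≠ 0) (n : ℕ) (hn : 1 ≤ n)
    (q : P2) (hq : q ≠ (a, b)) :
    Y1r (fun r => Real.sqrt ((Y1r (psiLog a b c n) r) ^ 2 +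
          (Y2r a c n (psiLog a b c n) r) ^ 2) ^ n * Y1r (psiLog a b c n) r) q +
      Y2r a c n (fun r => Real.sqrt ((Y1r (psiLog a b c n) r) ^ 2 +
          (Y2r a c n (psiLog a b c n) r) ^ 2) ^ n * Y2r a c n (psiLog a b c n) r) q = 0 := by
  have hopen : ∀ᶠ r in nhds q, r ≠ (a, b) :=
    (isOpen_compl_singleton).eventually_mem (by simpa using hq)
  have hev1 : (fun r => Real.sqrt ((Y1r (psiLog a b c n) r) ^ 2 +
      (Y2r a c n (psiLog a b c n) r) ^ 2) ^ n * Y1r (psiLog a b c n) r)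
      =ᶠ[nhds q] G1 a b c n := by
    filter_upwards [hopen] with r hr
    exact F1_eq a b c hc n r hr
  have hev2 : (fun r => Real.sqrt ((Y1r (psiLog a b c n) r) ^ 2 +
      (Y2r a c n (psiLog a b c n) r) ^ 2) ^ n * Y2r a c n (psiLog a b c n) r)
      =ᶠ[nhds q] G2 a b c n := by
    filter_upwards [hopen] with r hr
    exact F2_eq a b c hc n r hr
  rw [show Y1r (fun r => Real.sqrt ((Y1r (psiLog a b c n) r) ^ 2 +
      (Y2r a c n (psiLog a b c n) r) ^ 2) ^ n * Y1r (psiLog a b c n) r) q =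
      fderiv ℝ (G1 a b c n) q (1, 0) by rw [Y1r, hev1.fderiv_eq]]
  rw [show Y2r a c n (fun r => Real.sqrt ((Y1r (psiLog a b c n) r) ^ 2 +
      (Y2r a c n (psiLog a b c n) r) ^ 2) ^ n * Y2r a c n (psiLog a b c n) r) q =
      c * (q.1 - a) ^ n * fderiv ℝ (G2 a b c n) q (0, 1) by rw [Y2r, hev2.fderiv_eq]]
  have hDpos := Dfun_pos a b c hc n q hq
  have hS := SF_pos a b c hc n q hq
  have hsub : HasFDerivAt (fun r : P2 => r.1 - a) (ContinuousLinearMap.fst ℝ ℝ ℝ) q :=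
    hasFDerivAt_fst.sub_const a
  have hsub2 : HasFDerivAt (fun r : P2 => r.2 - b) (ContinuousLinearMap.snd ℝ ℝ ℝ) q :=
    hasFDerivAt_snd.sub_const b
  have hsqrt : HasFDerivAt (SF a b c n) ((1 / (2 * Real.sqrt (Dfun a b c n q))) •
      ((2 * ((n:ℝ) + 1) * c ^ 2 * (q.1 - a) ^ (2 * n + 1)) • ContinuousLinearMap.fst ℝ ℝ ℝ +
       (2 * ((n:ℝ) + 1) ^ 2 * (q.2 - b)) • ContinuousLinearMap.snd ℝ ℝ ℝ)) q :=
    (hasFDerivAt_Dfun a b c n q).sqrt hDpos.ne'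
  have hpow : HasFDerivAt (fun r => (SF a b c n r) ^ (n+2))
      ((↑(n+2) * (SF a b c n q) ^ (n+2-1)) • _) q :=
    (hasDerivAt_pow (n+2) (SF a b c n q)).comp_hasFDerivAt q hsqrt
  have hinv : HasFDerivAt (fun r => ((SF a b c n r) ^ (n+2))⁻¹)
      ((-(((SF a b c n q)^(n+2)) ^ 2)⁻¹) • _) q :=
    (hasDerivAt_inv (pow_ne_zero _ hS.ne')).comp_hasFDerivAt q hpow
  rcases eq_or_ne (q.1 - a) 0 with hu | hu
  · -- degenerate line: q.1 = a
    rw [hu, zero_pow (by omega : n ≠ 0), mul_zero, zero_mul, add_zero]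
    -- fderiv of G1 is 0 here
    have hphi : HasDerivAt (fun x : ℝ => x ^ (2*n+1) * |x| ^ (n*n)) 0 0 := by
      rw [hasDerivAt_iff_tendsto_slope]
      have hcongr : (slope (fun x : ℝ => x ^ (2*n+1) * |x| ^ (n*n)) 0)
          =ᶠ[nhdsWithin 0 {(0:ℝ)}ᶜ] fun x => x ^ (2*n) * |x| ^ (n*n) := by
        filter_upwards [self_mem_nhdsWithin] with x hx
        have hx : x ≠ 0 := hx
        simp only [slope, sub_zero, vsub_eq_sub]
        rw [smul_eq_mul]
        field_simp
        ring
      rw [Filter.tendsto_congr' hcongr]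
      have hlim : Filter.Tendsto (fun x : ℝ => x ^ (2*n) * |x| ^ (n*n)) (nhds 0)
          (nhds ((0:ℝ) ^ (2*n) * |(0:ℝ)| ^ (n*n))) :=
        ((continuous_pow (2*n)).mul (continuous_abs.pow (n*n))).tendsto 0
      have h0 : ((0:ℝ) ^ (2*n) * |(0:ℝ)| ^ (n*n)) = 0 := by
        rw [zero_pow (by omega : 2*n ≠ 0)]; ring
      rw [h0] at hlim
      exact hlim.mono_left nhdsWithin_le_nhds
    have hphiq : HasFDerivAt (fun r : P2 => (r.1 - a) ^ (2*n+1) * |r.1 - a| ^ (n*n))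
        ((0:ℝ) • ContinuousLinearMap.fst ℝ ℝ ℝ) q := by
      have hphi' : HasDerivAt (fun x : ℝ => x ^ (2*n+1) * |x| ^ (n*n)) 0 (q.1 - a) := by
        rw [hu]; exact hphi
      have := hphi'.comp_hasFDerivAt q hsub
      simp only [zero_smul] at this ⊢
      exact this
    have hG1fun : G1 a b c n = fun r => (2 ^ (n+1) * ((n:ℝ)+1) ^ (n+1) * |c| ^ n * c ^ 2) *
        (((r.1 - a) ^ (2*n+1) * |r.1 - a| ^ (n*n)) * ((SF a b c n r) ^ (n+2))⁻¹) := by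
      funext r; unfold G1; ring
    erw [hG1fun, ((hphiq.mul hinv).const_mul _).fderiv]
    simp [hu, zero_pow (by omega : 2*n+1 ≠ 0)]
  · -- main case: q.1 ≠ a
    set ε : ℝ := |q.1 - a| / (q.1 - a) with hε
    have hevabs : ∀ᶠ r in nhds q, |r.1 - a| = ε * (r.1 - a) := by
      have hcont : ContinuousAt (fun r : P2 => (r.1 - a) * (q.1 - a)) q := by fun_prop
      have hprodpos : (0:ℝ) < (q.1 - a) * (q.1 - a) := mul_self_pos.mpr hu
      filter_upwards [hcont.eventually (lt_mem_nhds hprodpos)] with r hr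
      rcases hu.lt_or_gt with hneg | hpos
      · have hrneg : r.1 - a < 0 := by nlinarith
        rw [abs_of_neg hrneg, hε, abs_of_neg hneg, neg_div, div_self hu]
        ring
      · have hrpos : 0 < r.1 - a := by nlinarith
        rw [abs_of_pos hrpos, hε, abs_of_pos hpos, div_self hu]
        ring
    set CA1 : ℝ := 2 ^ (n+1) * ((n:ℝ)+1) ^ (n+1) * |c| ^ n * c ^ 2 * ε ^ (n*n) with hCA1
    set CB1 : ℝ := 2 ^ (n+1) * ((n:ℝ)+1) ^ (n+2) * |c| ^ n * c * ε ^ (n*n) with hCB1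
    have hevG1 : G1 a b c n =ᶠ[nhds q]
        fun r => CA1 * ((r.1 - a) ^ (n*n+2*n+1) * ((SF a b c n r) ^ (n+2))⁻¹) := by
      filter_upwards [hevabs] with r hr
      unfold G1
      rw [hr, hCA1, mul_pow]
      ring
    have hevG2 : G2 a b c n =ᶠ[nhds q]
        fun r => CB1 * ((r.1 - a) ^ (n*n+n) * (r.2 - b) * ((SF a b c n r) ^ (n+2))⁻¹) := by
      filter_upwards [hevabs] with r hr
      unfold G2
      rw [hr, hCB1, mul_pow]
      ring
    rw [hevG1.fderiv_eq, hevG2.fderiv_eq]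
    have hnum1 : HasFDerivAt (fun r : P2 => (r.1 - a) ^ (n*n+2*n+1))
        ((↑(n*n+2*n+1) * (q.1-a) ^ (n*n+2*n+1-1)) • ContinuousLinearMap.fst ℝ ℝ ℝ) q :=
      by have := (hasDerivAt_pow (n*n+2*n+1) (q.1 - a)).comp_hasFDerivAt q hsub; exact this
    have hnum2 : HasFDerivAt (fun r : P2 => (r.1 - a) ^ (n*n+n))
        ((↑(n*n+n) * (q.1-a) ^ (n*n+n-1)) • ContinuousLinearMap.fst ℝ ℝ ℝ) q :=
      (hasDerivAt_pow _ (q.1 - a)).comp_hasFDerivAt q hsub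
    rw [(show HasFDerivAt (fun r : P2 =>
        CA1 * ((r.1 - a) ^ (n*n+2*n+1) * ((SF a b c n r) ^ (n+2))⁻¹)) _ q
        from (hnum1.mul hinv).const_mul CA1).fderiv,
      (show HasFDerivAt (fun r : P2 =>
        CB1 * ((r.1 - a) ^ (n*n+n) * (r.2 - b) * ((SF a b c n r) ^ (n+2))⁻¹)) _ q
        from ((hnum2.mul hsub2).mul hinv).const_mul CB1).fderiv]
    simp only [ContinuousLinearMap.smul_apply, ContinuousLinearMap.add_apply,
      ContinuousLinearMap.coe_smul', Pi.smul_apply, ContinuousLinearMap.coe_fst',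
      ContinuousLinearMap.coe_snd', smul_eq_mul, mul_one, mul_zero, add_zero, zero_add]
    have hsq : Real.sqrt (Dfun a b c n q) = SF a b c n q := rfl
    rw [hsq]
    have hexp1 : n*n+2*n+1-1 = n*n+2*n := by omega
    have hexp2 : n+2-1 = n+1 := by omega
    rw [hexp1, hexp2]
    have hS2 : (SF a b c n q) ^ 2 = c ^ 2 * (q.1-a) ^ (2*n+2) + ((n:ℝ)+1) ^ 2 * (q.2-b) ^ 2 :=
      SF_sq a b c hc n q hq
    have hCB : c * CB1 = ((n:ℝ)+1) * CA1 := by rw [hCA1, hCB1]; ring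
    exact final_alg n c (q.1-a) (q.2-b) (SF a b c n q) CA1 CB1 hS hS2 hCB
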